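/- Let t ≥ 1 be an integer and q = 3^t. The numerical semigroup generated by {q−1, q, q+1, 2q−4} has exactly q(q−1)/6 gaps; that is, the complement in ℕ of the additive submonoid of ℕ generated by q−1, q, q+1 and 2q−4 is a finite set with exactly q(q−1)/6 elements. -/

import Mathlib

namespace Stmt9

/-- The gap condition for the pair `(a, b)` with `n = a*q + b`, `q = 6m+3`. -/
def Cond (m a b : ℕ) : Prop :=
  a + 1 ≤ b ∧ (b + a + 2*((a+1)/2) + 2 ≤ 6*m+3 ∨
    (a % 2 = 1 ∧ b + a + 2*((a+1)/2) = 6*m+3 ∧ 2*a + 2*((a+1)/2) + 3 ≤ 6*m+3))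

instance (m a b : ℕ) : Decidable (Cond m a b) := by unfold Cond; infer_instance

/-- The gap predicate. -/
def P (m n : ℕ) : Prop := Cond m (n / (6*m+3)) (n % (6*m+3))

def BFin (m a : ℕ) : Finset ℕ := (Finset.range (6*m+3)).filter (fun b => Cond m a b)

def gcount (m a : ℕ) : ℕ :=
  ((6*m+3) - (2*a + 2*((a+1)/2) + 2)) +
    (if a % 2 = 1 ∧ 2*a + 2*((a+1)/2) + 3 ≤ 6*m+3 then 1 else 0)

def GFin (m : ℕ) : Finset ℕ :=
  (Finset.range (6*m+3)).biUnion fun a => (BFin m a).image (fun b => a*(6*m+3) + b)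

lemma mem_closure_iff (m n : ℕ) :
    n ∈ AddSubmonoid.closure ({6*m+2, 6*m+3, 6*m+4, 12*m+2} : Set ℕ) ↔
    ∃ x y z w, n = x*(6*m+2) + y*(6*m+3) + z*(6*m+4) + w*(12*m+2) := by
  constructor
  · intro h
    induction h using AddSubmonoid.closure_induction with
    | mem g hg =>
      simp only [Set.mem_insert_iff, Set.mem_singleton_iff] at hg
      rcases hg with rfl | rfl | rfl | rfl
      · exact ⟨1,0,0,0, by ring⟩
      · exact ⟨0,1,0,0, by ring⟩
      · exact ⟨0,0,1,0, by ring⟩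
      · exact ⟨0,0,0,1, by ring⟩
    | zero => exact ⟨0,0,0,0, by ring⟩
    | add u v hu hv ihu ihv =>
      obtain ⟨x,y,z,w,rfl⟩ := ihu
      obtain ⟨x',y',z',w',rfl⟩ := ihv
      exact ⟨x+x', y+y', z+z', w+w', by ring⟩
  · rintro ⟨x,y,z,w,rfl⟩
    have h1 : (6*m+2) ∈ AddSubmonoid.closure ({6*m+2, 6*m+3, 6*m+4, 12*m+2} : Set ℕ) :=
      AddSubmonoid.subset_closure (by simp)
    have h2 : (6*m+3) ∈ AddSubmonoid.closure ({6*m+2, 6*m+3, 6*m+4, 12*m+2} : Set ℕ) :=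
      AddSubmonoid.subset_closure (by simp)
    have h3 : (6*m+4) ∈ AddSubmonoid.closure ({6*m+2, 6*m+3, 6*m+4, 12*m+2} : Set ℕ) :=
      AddSubmonoid.subset_closure (by simp)
    have h4 : (12*m+2) ∈ AddSubmonoid.closure ({6*m+2, 6*m+3, 6*m+4, 12*m+2} : Set ℕ) :=
      AddSubmonoid.subset_closure (by simp)
    have hm : ∀ (k g : ℕ), g ∈ AddSubmonoid.closure ({6*m+2, 6*m+3, 6*m+4, 12*m+2} : Set ℕ) →
        k * g ∈ AddSubmonoid.closure ({6*m+2, 6*m+3, 6*m+4, 12*m+2} : Set ℕ) := by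
      intro k g hg
      have := nsmul_mem hg k
      simpa [smul_eq_mul] using this
    exact add_mem (add_mem (add_mem (hm x _ h1) (hm y _ h2)) (hm z _ h3)) (hm w _ h4)

lemma not_P_of_combo (m n : ℕ)
    (h : ∃ x y z w, n = x*(6*m+2) + y*(6*m+3) + z*(6*m+4) + w*(12*m+2)) : ¬ P m n := by
  intro hP
  obtain ⟨x, y, z, w, hn⟩ := h
  unfold P Cond at hP
  set a := n / (6*m+3) with ha
  set b := n % (6*m+3) with hb
  have hab : (6*m+3) * a + b = n := Nat.div_add_mod n (6*m+3)
  have hblt : b < 6*m+3 := Nat.mod_lt _ (by omega)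
  rw [hn] at hab
  rcases le_or_gt (x + y + z + 2*w) a with hs | hs
  · obtain ⟨u, hu⟩ : ∃ u, a = x + y + z + 2*w + u := ⟨a - (x+y+z+2*w), by omega⟩
    have key : x + 4*w + (6*m+3)*u + b = z := by
      rw [hu] at hab
      zify at hab ⊢
      linear_combination hab
    obtain ⟨U, hU⟩ : ∃ U, (6*m+3)*u = U := ⟨_, rfl⟩
    rw [hU] at key
    omega
  · obtain ⟨j, hj⟩ : ∃ j, x + y + z + 2*w = a + 1 + j := ⟨x+y+z+2*w - (a+1), by omega⟩
    have key : b + x + 4*w = 6*m+3 + (6*m+3)*j + z := by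
      zify at hab hj ⊢
      linear_combination hab + (6*(m:ℤ)+3) * hj
    rcases j with _ | _ | j'
    · simp only [Nat.mul_zero] at key
      omega
    · have h1 : (6*m+3) * 1 = 6*m+3 := by ring
      rw [h1] at key
      omega
    · have h1 : (6*m+3) * (j' + 2) = (6*m+3)*j' + (12*m+6) := by ring
      rw [h1] at key
      have h2 : 3 * j' ≤ (6*m+3) * j' := Nat.mul_le_mul_right j' (by omega)
      obtain ⟨J, hJ⟩ : ∃ J, (6*m+3)*j' = J := ⟨_, rfl⟩
      rw [hJ] at key h2
      omega

lemma interval_mem (m k d r : ℕ) (h : r ≤ 2*k) :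
    ∃ x y z w, k*(6*m+2) + d*(12*m+2) + r
      = x*(6*m+2) + y*(6*m+3) + z*(6*m+4) + w*(12*m+2) := by
  rcases le_or_gt r k with h1 | h1
  · obtain ⟨x, hx⟩ : ∃ x, k = x + r := ⟨k - r, by omega⟩
    exact ⟨x, r, 0, d, by rw [hx]; ring⟩
  · obtain ⟨p, hp⟩ : ∃ p, r = k + p := ⟨r - k, by omega⟩
    obtain ⟨y, hy⟩ : ∃ y, k = y + p := ⟨k - p, by omega⟩
    exact ⟨0, y, p, d, by rw [hp, hy]; ring⟩

lemma combo_of_not_cond (m a b : ℕ) (hb : b < 6*m+3) (h : ¬ Cond m a b) :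
    ∃ x y z w, a*(6*m+3) + b = x*(6*m+2) + y*(6*m+3) + z*(6*m+4) + w*(12*m+2) := by
  rcases le_or_gt b a with hba | hba
  · obtain ⟨x,y,z,w,he⟩ := interval_mem m a 0 (a+b) (by omega)
    exact ⟨x,y,z,w, by rw [← he]; ring⟩
  · have hOr : ¬(b + a + 2*((a+1)/2) + 2 ≤ 6*m+3 ∨
        (a % 2 = 1 ∧ b + a + 2*((a+1)/2) = 6*m+3 ∧ 2*a + 2*((a+1)/2) + 3 ≤ 6*m+3)) :=
      fun hc => h ⟨hba, hc⟩
    have hnc1 : ¬(b + a + 2*((a+1)/2) + 2 ≤ 6*m+3) := fun hc => hOr (Or.inl hc)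
    have hnc2 : ¬(a % 2 = 1 ∧ b + a + 2*((a+1)/2) = 6*m+3 ∧ 2*a + 2*((a+1)/2) + 3 ≤ 6*m+3) :=
      fun hc => hOr (Or.inr hc)
    rcases le_or_gt (6*m+3) (b + a + 1) with hge | hlt
    · obtain ⟨r, hr⟩ : ∃ r, b + a + 1 = r + (6*m+3) := ⟨b + a + 1 - (6*m+3), by omega⟩
      obtain ⟨x,y,z,w,he⟩ := interval_mem m (a+1) 0 r (by omega)
      refine ⟨x,y,z,w, ?_⟩
      rw [← he]
      zify at hr ⊢
      linear_combination hr
    · obtain ⟨e, he⟩ : ∃ e, b + a + 1 + e = 6*m+3 := ⟨6*m+3 - (b+a+1), by omega⟩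
      rcases Nat.even_or_odd e with hpar | hpar
      · obtain ⟨f, hf⟩ : ∃ f, e = 2*f := ⟨e/2, by rcases hpar with ⟨f, hf⟩; omega⟩
        obtain ⟨k, hk⟩ : ∃ k, k + 2*f = a + 1 := ⟨a + 1 - 2*f, by omega⟩
        obtain ⟨x,y,z,w,hE⟩ := interval_mem m k f 0 (by omega)
        refine ⟨x,y,z,w, ?_⟩
        rw [← hE]
        zify at hk he hf ⊢
        linear_combination (-(6*(m:ℤ)+2))*hk + he - hf
      · obtain ⟨f, hf⟩ : ∃ f, e = 2*f + 1 := ⟨e/2, by rcases hpar with ⟨f, hf⟩; omega⟩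
        obtain ⟨k, hk, hk1⟩ : ∃ k, k + 2*f + 2 = a + 1 ∧ 1 ≤ k :=
          ⟨a - 1 - 2*f, by omega, by omega⟩
        obtain ⟨x,y,z,w,hE⟩ := interval_mem m k (f+1) 1 (by omega)
        refine ⟨x,y,z,w, ?_⟩
        rw [← hE]
        zify at hk he hf ⊢
        linear_combination (-(6*(m:ℤ)+2))*hk + he - hf

lemma card_BFin (m a : ℕ) : (BFin m a).card = gcount m a := by
  have hset : BFin m a =
      Finset.Ico (a+1) ((a+1) + ((6*m+3) - (2*a + 2*((a+1)/2) + 2))) ∪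
      (if a % 2 = 1 ∧ 2*a + 2*((a+1)/2) + 3 ≤ 6*m+3
        then {(6*m+3) - (a + 2*((a+1)/2))} else ∅) := by
    ext b
    simp only [BFin, Finset.mem_filter, Finset.mem_range, Finset.mem_union, Finset.mem_Ico]
    simp only [Cond]
    split_ifs with h
    · simp only [Finset.mem_singleton]; omega
    · simp only [Finset.notMem_empty, or_false]; omega
  have hdisj : Disjoint
      (Finset.Ico (a+1) ((a+1) + ((6*m+3) - (2*a + 2*((a+1)/2) + 2))))
      (if a % 2 = 1 ∧ 2*a + 2*((a+1)/2) + 3 ≤ 6*m+3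
        then ({(6*m+3) - (a + 2*((a+1)/2))} : Finset ℕ) else ∅) := by
    rw [Finset.disjoint_left]
    intro b hb hb'
    simp only [Finset.mem_Ico] at hb
    split_ifs at hb' with h
    · simp only [Finset.mem_singleton] at hb'; omega
    · exact absurd hb' (Finset.notMem_empty b)
  rw [hset, Finset.card_union_of_disjoint hdisj, Nat.card_Ico]
  unfold gcount
  split_ifs with h
  · simp
  · simp

lemma div_helper (m a b : ℕ) (hb : b < 6*m+3) : (a*(6*m+3) + b) / (6*m+3) = a := by
  rw [mul_comm, Nat.mul_add_div (by omega), Nat.div_eq_of_lt hb, Nat.add_zero]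

lemma mod_helper (m a b : ℕ) (hb : b < 6*m+3) : (a*(6*m+3) + b) % (6*m+3) = b := by
  rw [mul_comm, Nat.mul_add_mod, Nat.mod_eq_of_lt hb]

lemma mem_GFin (m n : ℕ) : n ∈ GFin m ↔ P m n := by
  simp only [GFin, Finset.mem_biUnion, Finset.mem_image, Finset.mem_range, BFin,
    Finset.mem_filter]
  constructor
  · rintro ⟨a, ha, b, ⟨hb, hcond⟩, rfl⟩
    unfold P
    rw [div_helper m a b hb, mod_helper m a b hb]
    exact hcond
  · intro hP
    have hb : n % (6*m+3) < 6*m+3 := Nat.mod_lt _ (by omega)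
    have h1 : n / (6*m+3) + 1 ≤ n % (6*m+3) := hP.1
    refine ⟨n/(6*m+3), by omega, n % (6*m+3), ⟨hb, hP⟩, ?_⟩
    rw [mul_comm]
    exact Nat.div_add_mod n (6*m+3)

lemma card_GFin (m : ℕ) : (GFin m).card = ∑ a ∈ Finset.range (6*m+3), gcount m a := by
  unfold GFin
  rw [Finset.card_biUnion]
  · apply Finset.sum_congr rfl
    intro a _
    rw [Finset.card_image_of_injective _ (add_right_injective _), card_BFin]
  · intro a _ a' _ hne
    rw [Function.onFun, Finset.disjoint_left]
    rintro n hn hn'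
    simp only [Finset.mem_image, BFin, Finset.mem_filter, Finset.mem_range] at hn hn'
    obtain ⟨b, ⟨hb, _⟩, hnb⟩ := hn
    obtain ⟨b', ⟨hb', _⟩, hnb'⟩ := hn'
    apply hne
    have h1 := div_helper m a b hb
    have h2 := div_helper m a' b' hb'
    rw [hnb] at h1
    rw [hnb'] at h2
    omega

lemma gcount_zero (m a : ℕ) (h : 2*m+1 ≤ a) : gcount m a = 0 := by
  unfold gcount; split_ifs <;> omega

lemma gcount_step (m a : ℕ) (h : a ≤ 2*m) : gcount (m+1) a = gcount m a + 6 := by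
  unfold gcount; split_ifs <;> omega

lemma sum_gcount : ∀ m, (∑ a ∈ Finset.range (2*m+1), gcount m a) = 6*m^2+5*m+1 := by
  intro m
  induction m with
  | zero => decide
  | succ m ih =>
    have he : 2*(m+1)+1 = (2*m+1) + 1 + 1 := by ring
    rw [he, Finset.sum_range_succ, Finset.sum_range_succ]
    have h2 : ∑ a ∈ Finset.range (2*m+1), gcount (m+1) a
        = ∑ a ∈ Finset.range (2*m+1), (gcount m a + 6) :=
      Finset.sum_congr rfl (fun a ha => gcount_step m a (by
        simp only [Finset.mem_range] at ha; omega))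
    rw [h2, Finset.sum_add_distrib, ih, Finset.sum_const, Finset.card_range, smul_eq_mul]
    have h3 : gcount (m+1) (2*m+1) = 4 := by unfold gcount; split_ifs <;> omega
    have h4 : gcount (m+1) (2*m+1+1) = 1 := by unfold gcount; split_ifs <;> omega
    rw [h3, h4]; ring

lemma sum_gcount_full (m : ℕ) :
    (∑ a ∈ Finset.range (6*m+3), gcount m a) = 6*m^2+5*m+1 := by
  rw [← sum_gcount m]
  apply (Finset.sum_subset _ _).symm
  · intro a ha
    simp only [Finset.mem_range] at *
    omega
  · intro a _ ha
    simp only [Finset.mem_range] at ha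
    exact gcount_zero m a (by omega)

lemma main (m : ℕ) :
    {n : ℕ | n ∉ AddSubmonoid.closure ({6*m+2, 6*m+3, 6*m+4, 12*m+2} : Set ℕ)}
      = ↑(GFin m) := by
  ext n
  simp only [Set.mem_setOf_eq, Finset.coe_sort_coe, Finset.mem_coe, mem_GFin]
  constructor
  · intro hn
    by_contra hP
    apply hn
    rw [mem_closure_iff]
    have hb : n % (6*m+3) < 6*m+3 := Nat.mod_lt _ (by omega)
    have := combo_of_not_cond m (n/(6*m+3)) (n % (6*m+3)) hb (fun hc => hP hc)
    obtain ⟨x,y,z,w,hc⟩ := this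
    refine ⟨x,y,z,w, ?_⟩
    rw [← hc, mul_comm]
    exact (Nat.div_add_mod n (6*m+3)).symm
  · intro hP hmem
    exact not_P_of_combo m n ((mem_closure_iff m n).mp hmem) hP

end Stmt9

/-- The numerical semigroup `⟨q-1, q, q+1, 2q-4⟩` (with `q = 3^t`) has exactly
`q(q-1)/6` gaps.  This is the Weierstrass semigroup at the places `P_{(a,b)}`
of `Z₃` with `β(P) = 0`. -/
theorem stmt_9 (t : ℕ) (ht : 1 ≤ t) (q : ℕ) (hq : q = 3 ^ t) :
    {n : ℕ | n ∉ AddSubmonoid.closure ({q - 1, q, q + 1, 2 * q - 4} : Set ℕ)}.Finite ∧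
    {n : ℕ | n ∉ AddSubmonoid.closure ({q - 1, q, q + 1, 2 * q - 4} : Set ℕ)}.ncard
      = q * (q - 1) / 6 := by
  have hq3 : 3 ≤ q := by
    rw [hq]
    calc 3 = 3^1 := by norm_num
    _ ≤ 3^t := Nat.pow_le_pow_right (by norm_num) ht
  have hodd : q % 2 = 1 := by
    rw [hq, Nat.pow_mod]
    simp
  have hdvd : (3:ℕ) ∣ q := hq ▸ dvd_pow_self 3 (by omega)
  obtain ⟨m, hm⟩ : ∃ m, q = 6*m+3 := ⟨q/6, by omega⟩
  have h1 : q - 1 = 6*m+2 := by omega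
  have h2 : q + 1 = 6*m+4 := by omega
  have h3 : 2*q - 4 = 12*m+2 := by omega
  rw [h1, h2, h3, hm, Stmt9.main m]
  refine ⟨(Stmt9.GFin m).finite_toSet, ?_⟩
  rw [Set.ncard_coe_finset, Stmt9.card_GFin, Stmt9.sum_gcount_full]
  have h5 : (6*m+3) * (6*m+2) = (6*m^2+5*m+1) * 6 := by ring
  rw [h5, Nat.mul_div_cancel _ (by norm_num)]
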